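/- Let H be self-adjoint with ground state energy E₀, and let b_t(η) = e^{itH} e^{−itH₀} (b(e^{−itE_M}η)) e^{itH₀} e^{−itH} where b is a bounded fermionic annihilation operator with ‖b(ξ)‖ ≤ ‖ξ‖. Suppose the asymptotic field b_∞(η) = s-lim_{t→∞} b_t(η) exists on D(H). If Ψ_E is an eigenvector of H and |⟨e^{−itE_M}η, ξ⟩| → 0 as t → ∞ for all ξ in a dense set (so that ‖b(e^{−itE_M}η)Φ‖ → 0 for Φ in a core), then b_∞(η)Ψ_E = 0. -/

import Mathlib

open Filter
open scoped Topology

/-- Asymptotic annihilation fields vanish on eigenvectors: let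
`b_t(η) = e^{itH} b(e^{−itE_M}η) e^{−itH}` (here `U t = e^{itH}` is the unitary group and
`bfree t = b(e^{−itE_M}η)` the free-evolved annihilation operator, uniformly bounded by
`C = ‖η‖`).  Suppose `‖bfree t Φ‖ → 0` for all `Φ` in a dense core (the non-stationary
phase decay `|⟨e^{−itE_M}η, ξ⟩| → 0`), `Ψ_E` is an eigenvector of `H` with eigenvalue
`En` (so `U t Ψ_E = e^{itEn} Ψ_E`), and the asymptotic field
`b_∞(η)Ψ_E = s-lim_{t→∞} b_t(η)Ψ_E` exists and equals `L`.  Then `L = 0`. -/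
theorem stmt_16 {E : Type*} [NormedAddCommGroup E] [InnerProductSpace ℂ E] [CompleteSpace E]
    (U : ℝ → (E ≃ₗᵢ[ℂ] E)) (bfree : ℝ → (E →L[ℂ] E)) (C : ℝ)
    (hbound : ∀ t, ‖bfree t‖ ≤ C)
    (D : Set E) (hD : Dense D)
    (hdecay : ∀ Φ ∈ D, Tendsto (fun t => ‖bfree t Φ‖) atTop (𝓝 0))
    (ΨE : E) (En : ℝ)
    (heig : ∀ t, U t ΨE = Complex.exp (Complex.I * t * En) • ΨE)
    (L : E)
    (hlim : Tendsto (fun t => U t (bfree t ((U t).symm ΨE))) atTop (𝓝 L)) :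
    L = 0 := by
  have hC : 0 ≤ C := le_trans (norm_nonneg (bfree 0)) (hbound 0)
  -- norm of the evolved vector equals the norm of bfree t ΨE
  have hsymm : ∀ t, (U t).symm ΨE = (Complex.exp (Complex.I * t * En))⁻¹ • ΨE := by
    intro t
    have h1 : (U t).symm (U t ΨE) = ΨE := (U t).symm_apply_apply ΨE
    rw [heig t, map_smul] at h1
    have habs : Complex.exp (Complex.I * t * En) ≠ 0 := Complex.exp_ne_zero _
    calc (U t).symm ΨE
        = (Complex.exp (Complex.I * t * En))⁻¹ •
            (Complex.exp (Complex.I * t * En) • (U t).symm ΨE) := by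
          rw [smul_smul, inv_mul_cancel₀ habs, one_smul]
      _ = (Complex.exp (Complex.I * t * En))⁻¹ • ΨE := by rw [h1]
  have habs1 : ∀ t : ℝ, ‖Complex.exp (Complex.I * t * En)‖ = 1 := by
    intro t
    have : Complex.I * t * En = ((t * En : ℝ) : ℂ) * Complex.I := by
      push_cast; ring
    rw [this, Complex.norm_exp_ofReal_mul_I]
  have hnorm : ∀ t, ‖U t (bfree t ((U t).symm ΨE))‖ = ‖bfree t ΨE‖ := by
    intro t
    rw [(U t).norm_map, hsymm t, map_smul, norm_smul, norm_inv, habs1, inv_one, one_mul]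
  -- the norm tends to zero
  have hzero : Tendsto (fun t => ‖bfree t ΨE‖) atTop (𝓝 0) := by
    rw [Metric.tendsto_atTop]
    intro ε hε
    obtain ⟨Φ, hΦD, hΦ⟩ := hD.exists_dist_lt ΨE (show (0:ℝ) < ε / (2 * (C + 1)) by positivity)
    have hdec := hdecay Φ hΦD
    rw [Metric.tendsto_atTop] at hdec
    obtain ⟨T, hT⟩ := hdec (ε / 2) (by positivity)
    refine ⟨T, fun t ht => ?_⟩
    have h1 : ‖bfree t ΨE‖ ≤ ‖bfree t Φ‖ + ‖bfree t (ΨE - Φ)‖ := by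
      have : bfree t ΨE = bfree t Φ + bfree t (ΨE - Φ) := by
        rw [← map_add]; congr 1; abel
      rw [this]; exact norm_add_le _ _
    have h2 : ‖bfree t (ΨE - Φ)‖ ≤ C * ‖ΨE - Φ‖ :=
      le_trans ((bfree t).le_opNorm _) (by
        exact mul_le_mul_of_nonneg_right (hbound t) (norm_nonneg _))
    have h3 : ‖ΨE - Φ‖ < ε / (2 * (C + 1)) := by
      rw [← dist_eq_norm]; exact hΦ
    have h4 : C * ‖ΨE - Φ‖ < ε / 2 := by
      calc C * ‖ΨE - Φ‖ ≤ (C + 1) * ‖ΨE - Φ‖ := by nlinarith [norm_nonneg (ΨE - Φ)]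
        _ < (C + 1) * (ε / (2 * (C + 1))) := by
            apply mul_lt_mul_of_pos_left h3; linarith
        _ = ε / 2 := by field_simp
    have h5 : ‖bfree t Φ‖ < ε / 2 := by
      have := hT t ht
      rwa [Real.dist_eq, sub_zero, abs_of_nonneg (norm_nonneg _)] at this
    rw [Real.dist_eq, sub_zero, abs_of_nonneg (norm_nonneg _)]
    linarith
  have hlimnorm : Tendsto (fun t => ‖U t (bfree t ((U t).symm ΨE))‖) atTop (𝓝 ‖L‖) :=
    (continuous_norm.tendsto L).comp hlim
  have : ‖L‖ = 0 := by
    have heq : (fun t => ‖U t (bfree t ((U t).symm ΨE))‖) = fun t => ‖bfree t ΨE‖ :=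
      funext hnorm
    rw [heq] at hlimnorm
    exact tendsto_nhds_unique hlimnorm hzero
  exact norm_eq_zero.mp this
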